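/- In the OV-to-HB reduction trace, a write event w(z) in the thread group of vector x ∈ A1 happens-before the read event r(z) in the thread t_y of vector y ∈ A2 if and only if x and y are not orthogonal (there exists a coordinate i with x[i] = y[i] = 1). Consequently, the constructed trace has an HB-race between some write and some read of z if and only if the OV instance (A1, A2) has an orthogonal pair. -/

import Mathlib

inductive Op : Type
  | read (x : ℕ)
  | write (x : ℕ)
  | acquire (l : ℕ)
  | release (l : ℕ)
  deriving DecidableEq

structure Event where
  tid : ℕ
  op : Op
  deriving DecidableEq

/-- A concurrent trace: a finite sequence of events, each with a thread id and an operation.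
Events are identified with their positions `Fin N`; trace order is the order on `Fin N`. -/
structure Trace where
  N : ℕ
  tid : Fin N → ℕ
  op : Fin N → Op

/-- Happens-before: the smallest (reflexive, transitive) order containing thread order and
ordering each release of a lock before every later (in trace order) acquire of that lock. -/
inductive HB (σ : Trace) : Fin σ.N → Fin σ.N → Prop
  | refl (i : Fin σ.N) : HB σ i i
  | thread {i j : Fin σ.N} : i < j → σ.tid i = σ.tid j → HB σ i j
  | relAcq {i j : Fin σ.N} (l : ℕ) : i < j → σ.op i = Op.release l → σ.op j = Op.acquire l →
      HB σ i j
  | trans {i j k : Fin σ.N} : HB σ i j → HB σ j k → HB σ i k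

def accessesVar (σ : Trace) (e : Fin σ.N) (x : ℕ) : Prop :=
  σ.op e = Op.read x ∨ σ.op e = Op.write x

/-- Build a trace from a list of events. -/
def Trace.ofList (es : List Event) : Trace :=
  ⟨es.length, fun i => (es.get i).tid, fun i => (es.get i).op⟩

/-- An empty critical section of thread `t` on lock `l`. -/
def cs (t l : ℕ) : List Event := [⟨t, Op.acquire l⟩, ⟨t, Op.release l⟩]

/-- Lock `ℓ^x` for the vector with index `a` of `A1`. -/
def lockX (a : ℕ) : ℕ := Nat.pair 0 a
/-- Lock `ℓ_i` for coordinate `i`. -/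
def lockI (i : ℕ) : ℕ := Nat.pair 1 i
/-- Lock `ℓ_(y,i)` for the vector with index `y` of `A2` and coordinate `i`. -/
def lockYI (y i : ℕ) : ℕ := Nat.pair 2 (Nat.pair y i)
/-- Thread `t(x, i)` (with `i = 0, …, d`). -/
def tidX (a i : ℕ) : ℕ := Nat.pair 0 (Nat.pair a i)
/-- Thread `t_y`. -/
def tidY (y : ℕ) : ℕ := Nat.pair 1 y

/-- `a` is the last vector of `A` whose coordinate `i` equals 1. -/
def isLast {n d : ℕ} (A : Fin n → Fin d → Bool) (a : Fin n) (i : Fin d) : Prop :=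
  A a i = true ∧ ∀ b : Fin n, a < b → A b i = false

/-- Thread `t(x,0)`: write `z` (variable 0), then an empty critical section on `ℓ^x`. -/
def threadX0 {n : ℕ} (a : Fin n) : List Event :=
  ⟨tidX a.val 0, Op.write 0⟩ :: cs (tidX a.val 0) (lockX a.val)

open scoped Classical in
/-- Thread `t(x,i)` for `i ∈ [d]`: a critical section on `ℓ^x`; if `x[i] = 1` a critical
section on `ℓ_i`, and additionally (if `x` is the last vector of `A1` with `x[i]=1`)
critical sections on `ℓ_(y,i)` for all `y ∈ A2`. -/
noncomputable def threadXi {n d : ℕ} (A1 : Fin n → Fin d → Bool) (a : Fin n) (i : Fin d) :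
    List Event :=
  cs (tidX a.val (i.val + 1)) (lockX a.val) ++
  (if A1 a i then
    cs (tidX a.val (i.val + 1)) (lockI i.val) ++
    (if isLast A1 a i then
      ((List.finRange n).map (fun y => cs (tidX a.val (i.val + 1)) (lockYI y.val i.val))).flatten
     else [])
   else [])

/-- Thread `t_y`: critical sections on `ℓ_(y,i)` for each `i` with `y[i]=1`, then `r(z)`. -/
def threadY {n d : ℕ} (A2 : Fin n → Fin d → Bool) (y : Fin n) : List Event :=
  (((List.finRange d).filter (fun i => A2 y i)).map
    (fun i => cs (tidY y.val) (lockYI y.val i.val))).flatten ++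
  [⟨tidY y.val, Op.read 0⟩]

/-- The OV-to-HB trace: all threads `t(x,i)` in vector order of `A1`, then all threads `t_y`. -/
noncomputable def ovhbTrace {n d : ℕ} (A1 A2 : Fin n → Fin d → Bool) : Trace :=
  Trace.ofList
    (((List.finRange n).map (fun a =>
        threadX0 a ++ ((List.finRange d).map (fun i => threadXi A1 a i)).flatten)).flatten ++
     ((List.finRange n).map (fun y => threadY A2 y)).flatten)


/-! ### Auxiliary infrastructure for the proof -/

namespace OVHB

open Op List

/-! #### Injectivity of names -/

lemma tidX_inj {a i a' i' : ℕ} : tidX a i = tidX a' i' ↔ a = a' ∧ i = i' := by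
  simp [tidX, Nat.pair_eq_pair]

lemma tidY_inj {y y' : ℕ} : tidY y = tidY y' ↔ y = y' := by
  simp [tidY, Nat.pair_eq_pair]

lemma tidX_ne_tidY {a i y : ℕ} : tidX a i ≠ tidY y := by
  simp [tidX, tidY, Nat.pair_eq_pair]

lemma lockX_inj {a a' : ℕ} : lockX a = lockX a' ↔ a = a' := by
  simp [lockX, Nat.pair_eq_pair]

lemma lockI_inj {i i' : ℕ} : lockI i = lockI i' ↔ i = i' := by
  simp [lockI, Nat.pair_eq_pair]

lemma lockYI_inj {y i y' i' : ℕ} : lockYI y i = lockYI y' i' ↔ y = y' ∧ i = i' := by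
  simp [lockYI, Nat.pair_eq_pair]

lemma lockX_ne_lockI {a i : ℕ} : lockX a ≠ lockI i := by
  simp [lockX, lockI, Nat.pair_eq_pair]

lemma lockX_ne_lockYI {a y i : ℕ} : lockX a ≠ lockYI y i := by
  simp [lockX, lockYI, Nat.pair_eq_pair]

lemma lockI_ne_lockYI {i y i' : ℕ} : lockI i ≠ lockYI y i' := by
  simp [lockI, lockYI, Nat.pair_eq_pair]

/-! #### Membership characterizations -/

variable {n d : ℕ}

lemma mem_cs {e : Event} {t l : ℕ} :
    e ∈ cs t l ↔ e = ⟨t, Op.acquire l⟩ ∨ e = ⟨t, Op.release l⟩ := by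
  simp [cs]

lemma mem_threadX0 {a : Fin n} {e : Event} :
    e ∈ threadX0 a ↔ e = ⟨tidX a.val 0, Op.write 0⟩ ∨
      e = ⟨tidX a.val 0, Op.acquire (lockX a.val)⟩ ∨
      e = ⟨tidX a.val 0, Op.release (lockX a.val)⟩ := by
  simp [threadX0, cs]

lemma mem_threadXi {A1 : Fin n → Fin d → Bool} {a : Fin n} {i : Fin d} {e : Event} :
    e ∈ threadXi A1 a i ↔
      ((e = ⟨tidX a.val (i.val+1), Op.acquire (lockX a.val)⟩ ∨
        e = ⟨tidX a.val (i.val+1), Op.release (lockX a.val)⟩) ∨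
       (A1 a i = true ∧
        ((e = ⟨tidX a.val (i.val+1), Op.acquire (lockI i.val)⟩ ∨
          e = ⟨tidX a.val (i.val+1), Op.release (lockI i.val)⟩) ∨
         (isLast A1 a i ∧ ∃ y : Fin n,
            e = ⟨tidX a.val (i.val+1), Op.acquire (lockYI y.val i.val)⟩ ∨
            e = ⟨tidX a.val (i.val+1), Op.release (lockYI y.val i.val)⟩)))) := by
  unfold threadXi
  by_cases h1 : A1 a i = true
  · by_cases h2 : isLast A1 a i <;>
      simp [h1, h2, cs, List.mem_flatten] <;> aesop
  · simp [h1, cs]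

lemma mem_threadY {A2 : Fin n → Fin d → Bool} {y : Fin n} {e : Event} :
    e ∈ threadY A2 y ↔
      (∃ i : Fin d, A2 y i = true ∧
        (e = ⟨tidY y.val, Op.acquire (lockYI y.val i.val)⟩ ∨
         e = ⟨tidY y.val, Op.release (lockYI y.val i.val)⟩)) ∨
      e = ⟨tidY y.val, Op.read 0⟩ := by
  simp [threadY, cs, List.mem_flatten]

/-- The thread group of vector `a` of `A1`. -/
noncomputable def groupX (A1 : Fin n → Fin d → Bool) (a : Fin n) : List Event :=
  threadX0 a ++ ((List.finRange d).map (fun i => threadXi A1 a i)).flatten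

/-- The full event list of the OV-to-HB trace. -/
noncomputable def esList (A1 A2 : Fin n → Fin d → Bool) : List Event :=
  ((List.finRange n).map (fun a => groupX A1 a)).flatten ++
  ((List.finRange n).map (fun y => threadY A2 y)).flatten

lemma ovhbTrace_eq (A1 A2 : Fin n → Fin d → Bool) :
    ovhbTrace A1 A2 = Trace.ofList (esList A1 A2) := rfl

lemma mem_esList {A1 A2 : Fin n → Fin d → Bool} {e : Event} :
    e ∈ esList A1 A2 ↔
      (∃ a : Fin n, e ∈ threadX0 a ∨ ∃ i : Fin d, e ∈ threadXi A1 a i) ∨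
      ∃ y : Fin n, e ∈ threadY A2 y := by
  simp [esList, groupX, List.mem_flatten]

/-! #### Tid facts -/

lemma tid_of_mem_threadX0 {a : Fin n} {e : Event} (h : e ∈ threadX0 a) :
    e.tid = tidX a.val 0 := by
  rcases mem_threadX0.1 h with h | h | h <;> subst h <;> rfl

lemma tid_of_mem_threadXi {A1 : Fin n → Fin d → Bool} {a : Fin n} {i : Fin d} {e : Event}
    (h : e ∈ threadXi A1 a i) : e.tid = tidX a.val (i.val + 1) := by
  rcases mem_threadXi.1 h with (h | h) | ⟨-, (h | h) | ⟨-, y, h | h⟩⟩ <;> subst h <;> rfl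

lemma tid_of_mem_threadY {A2 : Fin n → Fin d → Bool} {y : Fin n} {e : Event}
    (h : e ∈ threadY A2 y) : e.tid = tidY y.val := by
  rcases mem_threadY.1 h with ⟨i, -, h | h⟩ | h <;> subst h <;> rfl

lemma tid_of_mem_groupX {A1 : Fin n → Fin d → Bool} {a : Fin n} {e : Event}
    (h : e ∈ groupX A1 a) : ∃ j, e.tid = tidX a.val j := by
  rcases List.mem_append.1 h with h | h
  · exact ⟨0, tid_of_mem_threadX0 h⟩
  · rw [List.mem_flatten] at h
    obtain ⟨L, hL, he⟩ := h
    rw [List.mem_map] at hL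
    obtain ⟨i, -, rfl⟩ := hL
    exact ⟨i.val + 1, tid_of_mem_threadXi he⟩


/-! #### Nodup of the trace list -/

/-- A numeric key for operations: the lock for lock operations, fresh values otherwise. -/
def lockOf : Op → ℕ
  | Op.acquire l => l
  | Op.release l => l
  | Op.read x => Nat.pair 3 x
  | Op.write x => Nat.pair 4 x

lemma lockOf_of_mem_cs {e : Event} {t l : ℕ} (h : e ∈ cs t l) : lockOf e.op = l := by
  rcases mem_cs.1 h with h | h <;> subst h <;> rfl

lemma disjoint_of_key {α γ : Type*} (k : α → γ) {L1 L2 : List α}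
    (h : ∀ e1 ∈ L1, ∀ e2 ∈ L2, k e1 ≠ k e2) : L1.Disjoint L2 :=
  fun {x} h1 h2 => h x h1 x h2 rfl

lemma disjoint_of_lock {L1 L2 : List Event}
    (h : ∀ e1 ∈ L1, ∀ e2 ∈ L2, lockOf e1.op ≠ lockOf e2.op) : L1.Disjoint L2 :=
  fun {x} h1 h2 => h x h1 x h2 rfl

lemma disjoint_of_tid {L1 L2 : List Event}
    (h : ∀ e1 ∈ L1, ∀ e2 ∈ L2, e1.tid ≠ e2.tid) : L1.Disjoint L2 :=
  fun {x} h1 h2 => h x h1 x h2 rfl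

lemma nodup_flatten_map {α β : Type*} (l : List α) (f : α → List β) (hl : l.Nodup)
    (h1 : ∀ a ∈ l, (f a).Nodup)
    (h2 : ∀ a ∈ l, ∀ b ∈ l, a ≠ b → (f a).Disjoint (f b)) :
    ((l.map f).flatten).Nodup := by
  rw [List.nodup_flatten]
  refine ⟨?_, ?_⟩
  · intro l' hl'; rw [List.mem_map] at hl'; obtain ⟨a, ha, rfl⟩ := hl'; exact h1 a ha
  · rw [List.pairwise_map]
    exact hl.imp_of_mem (fun ha hb hne => h2 _ ha _ hb hne)

lemma nodup_cs {t l : ℕ} : (cs t l).Nodup := by simp [cs]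

lemma nodup_threadX0 {a : Fin n} : (threadX0 a).Nodup := by simp [threadX0, cs]

lemma lockOf_of_mem_flatY {t i' : ℕ} {e : Event}
    (h : e ∈ ((List.finRange n).map (fun y : Fin n => cs t (lockYI y.val i'))).flatten) :
    ∃ y : Fin n, lockOf e.op = lockYI y.val i' := by
  rw [List.mem_flatten] at h
  obtain ⟨L, hL, he⟩ := h
  rw [List.mem_map] at hL
  obtain ⟨y, -, rfl⟩ := hL
  exact ⟨y, lockOf_of_mem_cs he⟩

lemma nodup_flatY {t i' : ℕ} :
    (((List.finRange n).map (fun y : Fin n => cs t (lockYI y.val i'))).flatten).Nodup := by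
  refine nodup_flatten_map _ _ (List.nodup_finRange n) (fun _ _ => nodup_cs)
    (fun y _ y' _ hne => disjoint_of_lock (fun e1 h1 e2 h2 => ?_))
  rw [lockOf_of_mem_cs h1, lockOf_of_mem_cs h2]
  intro hc
  rw [lockYI_inj] at hc
  exact hne (Fin.val_injective hc.1)

lemma nodup_threadXi {A1 : Fin n → Fin d → Bool} {a : Fin n} {i : Fin d} :
    (threadXi A1 a i).Nodup := by
  unfold threadXi
  by_cases h1 : A1 a i = true
  · by_cases h2 : isLast A1 a i
    · rw [if_pos h1, if_pos h2, List.nodup_append, List.nodup_append]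
      refine ⟨nodup_cs, ⟨nodup_cs, nodup_flatY, ?_⟩, ?_⟩
      · refine List.disjoint_iff_ne.1 (disjoint_of_lock (fun e1 hm1 e2 hm2 => ?_))
        rw [lockOf_of_mem_cs hm1]
        obtain ⟨y, hy⟩ := lockOf_of_mem_flatY hm2
        rw [hy]
        exact lockI_ne_lockYI
      · refine List.disjoint_iff_ne.1 (disjoint_of_lock (fun e1 hm1 e2 hm2 => ?_))
        rw [lockOf_of_mem_cs hm1]
        rcases List.mem_append.1 hm2 with hm2 | hm2
        · rw [lockOf_of_mem_cs hm2]; exact lockX_ne_lockI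
        · obtain ⟨y, hy⟩ := lockOf_of_mem_flatY hm2
          rw [hy]; exact lockX_ne_lockYI
    · rw [if_pos h1, if_neg h2, List.nodup_append, List.nodup_append]
      refine ⟨nodup_cs, ⟨nodup_cs, by simp, by simp [List.Disjoint]⟩, ?_⟩
      refine List.disjoint_iff_ne.1 (disjoint_of_lock (fun e1 hm1 e2 hm2 => ?_))
      rw [lockOf_of_mem_cs hm1]
      rcases List.mem_append.1 hm2 with hm2 | hm2
      · rw [lockOf_of_mem_cs hm2]; exact lockX_ne_lockI
      · simp at hm2
  · rw [if_neg h1]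
    simpa using (nodup_cs (t := tidX a.val (i.val+1)) (l := lockX a.val))

lemma nodup_threadY {A2 : Fin n → Fin d → Bool} {y : Fin n} : (threadY A2 y).Nodup := by
  unfold threadY
  rw [List.nodup_append]
  refine ⟨?_, by simp, ?_⟩
  · refine nodup_flatten_map _ _ ((List.nodup_finRange d).filter _) (fun _ _ => nodup_cs)
      (fun i _ i' _ hne => disjoint_of_lock (fun e1 h1 e2 h2 => ?_))
    rw [lockOf_of_mem_cs h1, lockOf_of_mem_cs h2]
    intro hc
    rw [lockYI_inj] at hc
    exact hne (Fin.val_injective hc.2)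
  · intro e he1 e' he2 hee; subst hee
    rw [List.mem_flatten] at he1
    obtain ⟨L, hL, he⟩ := he1
    rw [List.mem_map] at hL
    obtain ⟨i, -, rfl⟩ := hL
    have h1 := lockOf_of_mem_cs he
    simp at he2
    rw [he2] at h1
    simp [lockOf, lockYI, Nat.pair_eq_pair] at h1

lemma nodup_groupX {A1 : Fin n → Fin d → Bool} {a : Fin n} : (groupX A1 a).Nodup := by
  unfold groupX
  rw [List.nodup_append]
  refine ⟨nodup_threadX0, ?_, ?_⟩
  · refine nodup_flatten_map _ _ (List.nodup_finRange d) (fun _ _ => nodup_threadXi)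
      (fun i _ i' _ hne => disjoint_of_tid (fun e1 h1 e2 h2 => ?_))
    rw [tid_of_mem_threadXi h1, tid_of_mem_threadXi h2]
    intro hc
    rw [tidX_inj] at hc
    exact hne (Fin.val_injective (by omega))
  · refine List.disjoint_iff_ne.1 (disjoint_of_tid (fun e1 h1 e2 h2 => ?_))
    rw [tid_of_mem_threadX0 h1]
    rw [List.mem_flatten] at h2
    obtain ⟨L, hL, he⟩ := h2
    rw [List.mem_map] at hL
    obtain ⟨i, -, rfl⟩ := hL
    rw [tid_of_mem_threadXi he]
    simp [tidX_inj]

lemma nodup_esList {A1 A2 : Fin n → Fin d → Bool} : (esList A1 A2).Nodup := by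
  unfold esList
  rw [List.nodup_append]
  refine ⟨?_, ?_, ?_⟩
  · refine nodup_flatten_map _ _ (List.nodup_finRange n) (fun _ _ => nodup_groupX)
      (fun a _ a' _ hne => disjoint_of_tid (fun e1 h1 e2 h2 => ?_))
    obtain ⟨j, hj⟩ := tid_of_mem_groupX h1
    obtain ⟨j', hj'⟩ := tid_of_mem_groupX h2
    rw [hj, hj']
    intro hc
    rw [tidX_inj] at hc
    exact hne (Fin.val_injective hc.1)
  · refine nodup_flatten_map _ _ (List.nodup_finRange n) (fun _ _ => nodup_threadY)
      (fun y _ y' _ hne => disjoint_of_tid (fun e1 h1 e2 h2 => ?_))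
    rw [tid_of_mem_threadY h1, tid_of_mem_threadY h2]
    intro hc
    rw [tidY_inj] at hc
    exact hne (Fin.val_injective hc)
  · refine List.disjoint_iff_ne.1 (disjoint_of_tid (fun e1 h1 e2 h2 => ?_))
    rw [List.mem_flatten] at h1 h2
    obtain ⟨L, hL, he⟩ := h1
    rw [List.mem_map] at hL
    obtain ⟨a, -, rfl⟩ := hL
    obtain ⟨j, hj⟩ := tid_of_mem_groupX he
    obtain ⟨L', hL', he'⟩ := h2
    rw [List.mem_map] at hL'
    obtain ⟨y, -, rfl⟩ := hL'
    rw [hj, tid_of_mem_threadY he']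
    exact tidX_ne_tidY


/-! #### Trace-order machinery -/

/-- `Bef L v w`: `v` occurs strictly before `w` in `L` (witnessed by a split). -/
def Bef (L : List Event) (v w : Event) : Prop :=
  ∃ P Q, L = P ++ Q ∧ v ∈ P ∧ w ∈ Q

lemma Bef.mem_left {L : List Event} {v w : Event} (h : Bef L v w) : v ∈ L := by
  obtain ⟨P, Q, rfl, hv, -⟩ := h; exact List.mem_append_left _ hv

lemma Bef.mem_right {L : List Event} {v w : Event} (h : Bef L v w) : w ∈ L := by
  obtain ⟨P, Q, rfl, -, hw⟩ := h; exact List.mem_append_right _ hw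

lemma bef_append {P Q : List Event} {v w : Event} (hv : v ∈ P) (hw : w ∈ Q) :
    Bef (P ++ Q) v w := ⟨P, Q, rfl, hv, hw⟩

lemma Bef.append_right {L Q : List Event} {v w : Event} (h : Bef L v w) :
    Bef (L ++ Q) v w := by
  obtain ⟨P, Q', rfl, hv, hw⟩ := h
  exact ⟨P, Q' ++ Q, by rw [List.append_assoc], hv, List.mem_append_left _ hw⟩

lemma Bef.append_left {L : List Event} (P : List Event) {v w : Event} (h : Bef L v w) :
    Bef (P ++ L) v w := by
  obtain ⟨P', Q', rfl, hv, hw⟩ := h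
  exact ⟨P ++ P', Q', by rw [List.append_assoc], List.mem_append_right _ hv, hw⟩

lemma Bef.flatten {LL : List (List Event)} {L : List Event} {v w : Event}
    (hL : L ∈ LL) (h : Bef L v w) : Bef LL.flatten v w := by
  induction LL with
  | nil => cases hL
  | cons hd tl ih =>
    rw [List.flatten_cons]
    rcases List.mem_cons.1 hL with rfl | hL
    · exact h.append_right
    · exact (ih hL).append_left hd
  
lemma mem_take_finRange {m k : ℕ} {i : Fin m} (h : i.val < k) :
    i ∈ (List.finRange m).take k := by
  rw [List.mem_iff_getElem]
  refine ⟨i.val, by simp; omega, ?_⟩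
  rw [List.getElem_take, List.getElem_finRange]
  ext; simp

lemma mem_drop_finRange {m k : ℕ} {i : Fin m} (h : k ≤ i.val) :
    i ∈ (List.finRange m).drop k := by
  rw [List.mem_iff_getElem]
  refine ⟨i.val - k, by simp; omega, ?_⟩
  rw [List.getElem_drop, List.getElem_finRange]
  ext; simp; omega

lemma bef_flatten_map_finRange {m : ℕ} (f : Fin m → List Event) {x y : Fin m} {v w : Event}
    (hxy : x < y) (hv : v ∈ f x) (hw : w ∈ f y) :
    Bef (((List.finRange m).map f).flatten) v w := by
  refine ⟨((((List.finRange m).take (x.val+1)).map f)).flatten,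
          ((((List.finRange m).drop (x.val+1)).map f)).flatten, ?_, ?_, ?_⟩
  · rw [← List.flatten_append, ← List.map_append, List.take_append_drop]
  · exact List.mem_flatten.2 ⟨f x, List.mem_map.2 ⟨x, mem_take_finRange (by omega), rfl⟩, hv⟩
  · exact List.mem_flatten.2 ⟨f y, List.mem_map.2 ⟨y, mem_drop_finRange (by omega), rfl⟩, hw⟩

lemma Bef.indexOf_lt {L : List Event} {v w : Event} (hnd : L.Nodup) (h : Bef L v w) :
    L.idxOf v < L.idxOf w := by
  obtain ⟨P, Q, rfl, hv, hw⟩ := h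
  have h1 : List.idxOf v (P ++ Q) < P.length := by
    rw [List.idxOf_append_of_mem hv]
    exact List.idxOf_lt_length_iff.2 hv
  have hwP : w ∉ P := by
    rw [List.nodup_append] at hnd
    exact fun hc => hnd.2.2 w hc w hw rfl
  have h2 : P.length ≤ List.idxOf w (P ++ Q) := by
    by_contra hlt
    push_neg at hlt
    have hmem : w ∈ P ++ Q := List.mem_append_right _ hw
    have hidx : List.idxOf w (P ++ Q) < (P ++ Q).length := List.idxOf_lt_length_iff.2 hmem
    have := List.idxOf_get hidx
    rw [List.get_eq_getElem, List.getElem_append_left hlt] at this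
    exact hwP (this ▸ List.getElem_mem _)
  omega

/-! #### Positions in the trace -/

variable {A1 A2 : Fin n → Fin d → Bool}

/-- The position of an event value in the trace. -/
noncomputable def epos (A1 A2 : Fin n → Fin d → Bool) (v : Event) (hv : v ∈ esList A1 A2) :
    Fin (ovhbTrace A1 A2).N :=
  ⟨(esList A1 A2).idxOf v, List.idxOf_lt_length_iff.2 hv⟩

lemma get_epos {v : Event} (hv : v ∈ esList A1 A2) :
    (esList A1 A2).get (epos A1 A2 v hv) = v :=
  List.idxOf_get _

lemma tid_epos {v : Event} (hv : v ∈ esList A1 A2) :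
    (ovhbTrace A1 A2).tid (epos A1 A2 v hv) = v.tid :=
  congrArg Event.tid (get_epos hv)

lemma op_epos {v : Event} (hv : v ∈ esList A1 A2) :
    (ovhbTrace A1 A2).op (epos A1 A2 v hv) = v.op :=
  congrArg Event.op (get_epos hv)

lemma eq_epos_of_get {p : Fin (ovhbTrace A1 A2).N} {v : Event}
    (h : (esList A1 A2).get p = v) (hv : v ∈ esList A1 A2) : p = epos A1 A2 v hv := by
  apply List.nodup_iff_injective_get.1 (nodup_esList (A1 := A1) (A2 := A2))
  rw [h, get_epos]

lemma epos_lt_of_bef {v w : Event} (h : Bef (esList A1 A2) v w)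
    (hv : v ∈ esList A1 A2) (hw : w ∈ esList A1 A2) :
    epos A1 A2 v hv < epos A1 A2 w hw :=
  h.indexOf_lt nodup_esList

lemma hb_bef_thread {v w : Event} (h : Bef (esList A1 A2) v w) (ht : v.tid = w.tid) :
    HB (ovhbTrace A1 A2) (epos A1 A2 v h.mem_left) (epos A1 A2 w h.mem_right) :=
  HB.thread (epos_lt_of_bef h _ _) (by rw [tid_epos, tid_epos, ht])

lemma hb_bef_relAcq {v w : Event} {l : ℕ} (h : Bef (esList A1 A2) v w)
    (hv : v.op = Op.release l) (hw : w.op = Op.acquire l) :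
    HB (ovhbTrace A1 A2) (epos A1 A2 v h.mem_left) (epos A1 A2 w h.mem_right) :=
  HB.relAcq l (epos_lt_of_bef h _ _) (by rw [op_epos, hv]) (by rw [op_epos, hw])

lemma HB_le {σ : Trace} {p q : Fin σ.N} (h : HB σ p q) : p ≤ q := by
  induction h with
  | refl => exact le_refl _
  | thread h _ => exact le_of_lt h
  | relAcq _ h _ _ => exact le_of_lt h
  | trans _ _ ih1 ih2 => exact le_trans ih1 ih2


/-! #### Locating events by tid and by op -/

lemma loc_tidXi {a0 : Fin n} {i0 : Fin d} {v : Event} (hv : v ∈ esList A1 A2)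
    (ht : v.tid = tidX a0.val (i0.val + 1)) : v ∈ threadXi A1 a0 i0 := by
  rcases mem_esList.1 hv with ⟨a', h | ⟨i', h⟩⟩ | ⟨y', h⟩
  · rw [tid_of_mem_threadX0 h, tidX_inj] at ht; omega
  · have h2 := (tid_of_mem_threadXi h).symm.trans ht
    rw [tidX_inj] at h2
    have ha : a' = a0 := Fin.val_injective h2.1
    have hi : i' = i0 := Fin.val_injective (by omega)
    subst ha; subst hi; exact h
  · rw [tid_of_mem_threadY h] at ht
    exact absurd ht.symm tidX_ne_tidY

lemma loc_tidY {y0 : Fin n} {v : Event} (hv : v ∈ esList A1 A2)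
    (ht : v.tid = tidY y0.val) : v ∈ threadY A2 y0 := by
  rcases mem_esList.1 hv with ⟨a', h | ⟨i', h⟩⟩ | ⟨y', h⟩
  · rw [tid_of_mem_threadX0 h] at ht; exact absurd ht tidX_ne_tidY
  · rw [tid_of_mem_threadXi h] at ht; exact absurd ht tidX_ne_tidY
  · have h2 := (tid_of_mem_threadY h).symm.trans ht
    rw [tidY_inj] at h2
    have hy : y' = y0 := Fin.val_injective h2
    subst hy; exact h

lemma mem_of_op_acquire {w : Event} (hw : w ∈ esList A1 A2) {l : ℕ}
    (hop : w.op = Op.acquire l) :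
    (∃ a : Fin n, l = lockX a.val ∧ w.tid = tidX a.val 0) ∨
    (∃ a : Fin n, ∃ i : Fin d, w.tid = tidX a.val (i.val + 1) ∧
      (l = lockX a.val ∨ (l = lockI i.val ∧ A1 a i = true) ∨
       ((∃ y : Fin n, l = lockYI y.val i.val) ∧ A1 a i = true))) ∨
    (∃ y : Fin n, ∃ i : Fin d, l = lockYI y.val i.val ∧ A2 y i = true ∧ w.tid = tidY y.val) := by
  rcases mem_esList.1 hw with ⟨a', h | ⟨i', h⟩⟩ | ⟨y', h⟩
  · rcases mem_threadX0.1 h with rfl | rfl | rfl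
    · exact absurd hop (by simp)
    · obtain rfl : lockX a'.val = l := by simpa using hop
      exact Or.inl ⟨a', rfl, rfl⟩
    · exact absurd hop (by simp)
  · rcases mem_threadXi.1 h with (rfl | rfl) | ⟨hA, (rfl | rfl) | ⟨hL, y, rfl | rfl⟩⟩
    · obtain rfl : lockX a'.val = l := by simpa using hop
      exact Or.inr (Or.inl ⟨a', i', rfl, Or.inl rfl⟩)
    · exact absurd hop (by simp)
    · obtain rfl : lockI i'.val = l := by simpa using hop
      exact Or.inr (Or.inl ⟨a', i', rfl, Or.inr (Or.inl ⟨rfl, hA⟩)⟩)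
    · exact absurd hop (by simp)
    · obtain rfl : lockYI y.val i'.val = l := by simpa using hop
      exact Or.inr (Or.inl ⟨a', i', rfl, Or.inr (Or.inr ⟨⟨y, rfl⟩, hA⟩)⟩)
    · exact absurd hop (by simp)
  · rcases mem_threadY.1 h with ⟨i'', hA2, rfl | rfl⟩ | rfl
    · obtain rfl : lockYI y'.val i''.val = l := by simpa using hop
      exact Or.inr (Or.inr ⟨y', i'', rfl, hA2, rfl⟩)
    · exact absurd hop (by simp)
    · exact absurd hop (by simp)

lemma mem_of_op_release {w : Event} (hw : w ∈ esList A1 A2) {l : ℕ}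
    (hop : w.op = Op.release l) :
    (∃ a : Fin n, l = lockX a.val ∧ w.tid = tidX a.val 0) ∨
    (∃ a : Fin n, ∃ i : Fin d, w.tid = tidX a.val (i.val + 1) ∧
      (l = lockX a.val ∨ (l = lockI i.val ∧ A1 a i = true) ∨
       ((∃ y : Fin n, l = lockYI y.val i.val) ∧ A1 a i = true))) ∨
    (∃ y : Fin n, ∃ i : Fin d, l = lockYI y.val i.val ∧ A2 y i = true ∧ w.tid = tidY y.val) := by
  rcases mem_esList.1 hw with ⟨a', h | ⟨i', h⟩⟩ | ⟨y', h⟩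
  · rcases mem_threadX0.1 h with rfl | rfl | rfl
    · exact absurd hop (by simp)
    · exact absurd hop (by simp)
    · obtain rfl : lockX a'.val = l := by simpa using hop
      exact Or.inl ⟨a', rfl, rfl⟩
  · rcases mem_threadXi.1 h with (rfl | rfl) | ⟨hA, (rfl | rfl) | ⟨hL, y, rfl | rfl⟩⟩
    · exact absurd hop (by simp)
    · obtain rfl : lockX a'.val = l := by simpa using hop
      exact Or.inr (Or.inl ⟨a', i', rfl, Or.inl rfl⟩)
    · exact absurd hop (by simp)
    · obtain rfl : lockI i'.val = l := by simpa using hop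
      exact Or.inr (Or.inl ⟨a', i', rfl, Or.inr (Or.inl ⟨rfl, hA⟩)⟩)
    · exact absurd hop (by simp)
    · obtain rfl : lockYI y.val i'.val = l := by simpa using hop
      exact Or.inr (Or.inl ⟨a', i', rfl, Or.inr (Or.inr ⟨⟨y, rfl⟩, hA⟩)⟩)
  · rcases mem_threadY.1 h with ⟨i'', hA2, rfl | rfl⟩ | rfl
    · exact absurd hop (by simp)
    · obtain rfl : lockYI y'.val i''.val = l := by simpa using hop
      exact Or.inr (Or.inr ⟨y', i'', rfl, hA2, rfl⟩)
    · exact absurd hop (by simp)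

/-! #### Parts of the trace and lifted `Bef` -/

/-- The `A1` part of the trace. -/
noncomputable def Xpart (A1 : Fin n → Fin d → Bool) : List Event :=
  ((List.finRange n).map (fun a => groupX A1 a)).flatten

/-- The `A2` part of the trace. -/
noncomputable def Ypart (A2 : Fin n → Fin d → Bool) : List Event :=
  ((List.finRange n).map (fun y => threadY A2 y)).flatten

lemma esList_eq : esList A1 A2 = Xpart A1 ++ Ypart A2 := rfl

lemma mem_Xpart_of_threadX0 {a : Fin n} {v : Event} (h : v ∈ threadX0 a) :
    v ∈ Xpart A1 :=
  List.mem_flatten.2 ⟨groupX A1 a, List.mem_map.2 ⟨a, List.mem_finRange a, rfl⟩,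
    List.mem_append_left _ h⟩

lemma mem_Xpart_of_threadXi {a : Fin n} {i : Fin d} {v : Event} (h : v ∈ threadXi A1 a i) :
    v ∈ Xpart A1 :=
  List.mem_flatten.2 ⟨groupX A1 a, List.mem_map.2 ⟨a, List.mem_finRange a, rfl⟩,
    List.mem_append_right _
      (List.mem_flatten.2 ⟨threadXi A1 a i, List.mem_map.2 ⟨i, List.mem_finRange i, rfl⟩, h⟩)⟩

lemma mem_Ypart_of_threadY {y : Fin n} {v : Event} (h : v ∈ threadY A2 y) :
    v ∈ Ypart A2 :=
  List.mem_flatten.2 ⟨threadY A2 y, List.mem_map.2 ⟨y, List.mem_finRange y, rfl⟩, h⟩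

lemma bef_es_of_groupX {a : Fin n} {v w : Event} (h : Bef (groupX A1 a) v w) :
    Bef (esList A1 A2) v w :=
  Bef.append_right (h.flatten (List.mem_map.2 ⟨a, List.mem_finRange a, rfl⟩))

lemma bef_groupX_of_threadXi {a : Fin n} {i : Fin d} {v w : Event}
    (h : Bef (threadXi A1 a i) v w) : Bef (groupX A1 a) v w :=
  (h.flatten (List.mem_map.2 ⟨i, List.mem_finRange i, rfl⟩)).append_left (threadX0 a)

lemma bef_es_of_threadXi {a : Fin n} {i : Fin d} {v w : Event}
    (h : Bef (threadXi A1 a i) v w) : Bef (esList A1 A2) v w :=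
  bef_es_of_groupX (bef_groupX_of_threadXi h)

lemma bef_es_of_threadY {y : Fin n} {v w : Event} (h : Bef (threadY A2 y) v w) :
    Bef (esList A1 A2) v w :=
  (h.flatten (List.mem_map.2 ⟨y, List.mem_finRange y, rfl⟩)).append_left (Xpart A1)

lemma not_bef_of_lt {p q : Fin (ovhbTrace A1 A2).N} (hpq : p < q) :
    ¬ Bef (esList A1 A2) ((esList A1 A2).get q) ((esList A1 A2).get p) := by
  intro h
  have h2 := h.indexOf_lt nodup_esList
  erw [List.get_idxOf nodup_esList, List.get_idxOf nodup_esList] at h2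
  exact absurd hpq (by omega)

/-! #### The reachability invariant -/

/-- Events that can be HB-reachable from the write of thread group `a`. -/
def Reach (A1 A2 : Fin n → Fin d → Bool) (a : Fin n) (v : Event) : Prop :=
  (∃ j, v.tid = tidX a.val j) ∨
  (∃ i : Fin d, A1 a i = true ∧ (∃ a'' : Fin n, v.tid = tidX a''.val (i.val + 1)) ∧
    (v.op = Op.acquire (lockI i.val) ∨ v.op = Op.release (lockI i.val) ∨
     ∃ y : Fin n, v.op = Op.acquire (lockYI y.val i.val) ∨
       v.op = Op.release (lockYI y.val i.val))) ∨
  (∃ y : Fin n, (∃ i : Fin d, A1 a i = true ∧ A2 y i = true) ∧ v.tid = tidY y.val)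

lemma reach_of_acq_lockX {a : Fin n} {w : Event} (hw : w ∈ esList A1 A2)
    (hop : w.op = Op.acquire (lockX a.val)) : Reach A1 A2 a w := by
  rcases mem_of_op_acquire hw hop with ⟨a2, hl, htw⟩ | ⟨a2, i2, htw, hl⟩ | ⟨y2, i2, hl, -, -⟩
  · rw [lockX_inj] at hl
    exact Or.inl ⟨0, by rw [htw, hl]⟩
  · rcases hl with hl | ⟨hl, -⟩ | ⟨⟨y2, hl⟩, -⟩
    · rw [lockX_inj] at hl
      exact Or.inl ⟨i2.val + 1, by rw [htw, hl]⟩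
    · simp [lockX, lockI, lockYI, Nat.pair_eq_pair] at hl
    · simp [lockX, lockI, lockYI, Nat.pair_eq_pair] at hl
  · simp [lockX, lockI, lockYI, Nat.pair_eq_pair] at hl

lemma reach_of_acq_lockI {a : Fin n} {i : Fin d} (hA : A1 a i = true) {w : Event}
    (hw : w ∈ esList A1 A2) (hop : w.op = Op.acquire (lockI i.val)) : Reach A1 A2 a w := by
  rcases mem_of_op_acquire hw hop with ⟨a2, hl, -⟩ | ⟨a2, i2, htw, hl⟩ | ⟨y2, i2, hl, -, -⟩
  · simp [lockX, lockI, lockYI, Nat.pair_eq_pair] at hl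
  · rcases hl with hl | ⟨hl, -⟩ | ⟨⟨y2, hl⟩, -⟩
    · simp [lockX, lockI, lockYI, Nat.pair_eq_pair] at hl
    · rw [lockI_inj] at hl
      refine Or.inr (Or.inl ⟨i, hA, ⟨a2, ?_⟩, Or.inl hop⟩)
      rw [htw, hl]
    · simp [lockX, lockI, lockYI, Nat.pair_eq_pair] at hl
  · simp [lockX, lockI, lockYI, Nat.pair_eq_pair] at hl

lemma reach_of_acq_lockYI {a : Fin n} {i : Fin d} {y : Fin n} (hA : A1 a i = true) {w : Event}
    (hw : w ∈ esList A1 A2) (hop : w.op = Op.acquire (lockYI y.val i.val)) :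
    Reach A1 A2 a w := by
  rcases mem_of_op_acquire hw hop with ⟨a2, hl, -⟩ | ⟨a2, i2, htw, hl⟩ | ⟨y2, i2, hl, hA2, htw⟩
  · simp [lockX, lockI, lockYI, Nat.pair_eq_pair] at hl
  · rcases hl with hl | ⟨hl, -⟩ | ⟨⟨y2, hl⟩, -⟩
    · simp [lockX, lockI, lockYI, Nat.pair_eq_pair] at hl
    · simp [lockX, lockI, lockYI, Nat.pair_eq_pair] at hl
    · rw [lockYI_inj] at hl
      refine Or.inr (Or.inl ⟨i, hA, ⟨a2, ?_⟩, Or.inr (Or.inr ⟨y, Or.inl hop⟩)⟩)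
      rw [htw, hl.2]
  · rw [lockYI_inj] at hl
    have hy : y2 = y := Fin.val_injective hl.1.symm
    have hi : i2 = i := Fin.val_injective hl.2.symm
    subst hy; subst hi
    exact Or.inr (Or.inr ⟨y2, ⟨i2, hA, hA2⟩, htw⟩)


lemma get_mem_esList (p : Fin (ovhbTrace A1 A2).N) :
    (esList A1 A2).get p ∈ esList A1 A2 := List.get_mem _ _

lemma reach_step_thread {a : Fin n} {p q : Fin (ovhbTrace A1 A2).N} (hpq : p < q)
    (ht : (ovhbTrace A1 A2).tid p = (ovhbTrace A1 A2).tid q)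
    (hp : Reach A1 A2 a ((esList A1 A2).get p)) :
    Reach A1 A2 a ((esList A1 A2).get q) := by
  have ht' : ((esList A1 A2).get p).tid = ((esList A1 A2).get q).tid := ht
  rcases hp with ⟨j, hj⟩ | ⟨i, hA, ⟨a'', htv⟩, hops⟩ | ⟨y, hcom, hty⟩
  · exact Or.inl ⟨j, by rw [← ht']; exact hj⟩
  · have hv' : (esList A1 A2).get p ∈ threadXi A1 a'' i := loc_tidXi (get_mem_esList p) htv
    have htw : ((esList A1 A2).get q).tid = tidX a''.val (i.val + 1) := by
      rw [← ht']; exact htv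
    have hw' : (esList A1 A2).get q ∈ threadXi A1 a'' i := loc_tidXi (get_mem_esList q) htw
    rcases mem_threadXi.1 hw' with (hw2 | hw2) | ⟨hA'', hrest⟩
    -- the first two cases (lock `ℓ^x` ops) come before `p` in the trace: contradiction
    · exfalso
      apply not_bef_of_lt hpq
      apply bef_es_of_threadXi (a := a'') (i := i)
      unfold threadXi
      refine bef_append ?_ ?_
      · rw [hw2]; exact mem_cs.2 (Or.inl rfl)
      · rcases mem_threadXi.1 hv' with (hv2 | hv2) | ⟨hA2, hv3⟩
        · exfalso; rw [hv2] at hops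
          simp [lockX, lockI, lockYI, Nat.pair_eq_pair] at hops
        · exfalso; rw [hv2] at hops
          simp [lockX, lockI, lockYI, Nat.pair_eq_pair] at hops
        · rw [if_pos hA2]
          rcases hv3 with (hv4 | hv4) | ⟨hL, y, hv4 | hv4⟩
          · exact List.mem_append_left _ (by rw [hv4]; exact mem_cs.2 (Or.inl rfl))
          · exact List.mem_append_left _ (by rw [hv4]; exact mem_cs.2 (Or.inr rfl))
          · refine List.mem_append_right _ ?_
            rw [if_pos hL]
            exact List.mem_flatten.2 ⟨_, List.mem_map.2 ⟨y, List.mem_finRange y, rfl⟩,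
              by rw [hv4]; exact mem_cs.2 (Or.inl rfl)⟩
          · refine List.mem_append_right _ ?_
            rw [if_pos hL]
            exact List.mem_flatten.2 ⟨_, List.mem_map.2 ⟨y, List.mem_finRange y, rfl⟩,
              by rw [hv4]; exact mem_cs.2 (Or.inr rfl)⟩
    · exfalso
      apply not_bef_of_lt hpq
      apply bef_es_of_threadXi (a := a'') (i := i)
      unfold threadXi
      refine bef_append ?_ ?_
      · rw [hw2]; exact mem_cs.2 (Or.inr rfl)
      · rcases mem_threadXi.1 hv' with (hv2 | hv2) | ⟨hA2, hv3⟩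
        · exfalso; rw [hv2] at hops
          simp [lockX, lockI, lockYI, Nat.pair_eq_pair] at hops
        · exfalso; rw [hv2] at hops
          simp [lockX, lockI, lockYI, Nat.pair_eq_pair] at hops
        · rw [if_pos hA2]
          rcases hv3 with (hv4 | hv4) | ⟨hL, y, hv4 | hv4⟩
          · exact List.mem_append_left _ (by rw [hv4]; exact mem_cs.2 (Or.inl rfl))
          · exact List.mem_append_left _ (by rw [hv4]; exact mem_cs.2 (Or.inr rfl))
          · refine List.mem_append_right _ ?_
            rw [if_pos hL]
            exact List.mem_flatten.2 ⟨_, List.mem_map.2 ⟨y, List.mem_finRange y, rfl⟩,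
              by rw [hv4]; exact mem_cs.2 (Or.inl rfl)⟩
          · refine List.mem_append_right _ ?_
            rw [if_pos hL]
            exact List.mem_flatten.2 ⟨_, List.mem_map.2 ⟨y, List.mem_finRange y, rfl⟩,
              by rw [hv4]; exact mem_cs.2 (Or.inr rfl)⟩
    · refine Or.inr (Or.inl ⟨i, hA, ⟨a'', htw⟩, ?_⟩)
      rcases hrest with (hv4 | hv4) | ⟨-, y, hv4 | hv4⟩
      · exact Or.inl (by rw [hv4])
      · exact Or.inr (Or.inl (by rw [hv4]))
      · exact Or.inr (Or.inr ⟨y, Or.inl (by rw [hv4])⟩)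
      · exact Or.inr (Or.inr ⟨y, Or.inr (by rw [hv4])⟩)
  · exact Or.inr (Or.inr ⟨y, hcom, by rw [← ht']; exact hty⟩)

lemma reach_step_relAcq {a : Fin n} {p q : Fin (ovhbTrace A1 A2).N} {l : ℕ} (hpq : p < q)
    (hrel : (ovhbTrace A1 A2).op p = Op.release l)
    (hacq : (ovhbTrace A1 A2).op q = Op.acquire l)
    (hp : Reach A1 A2 a ((esList A1 A2).get p)) :
    Reach A1 A2 a ((esList A1 A2).get q) := by
  have hrel' : ((esList A1 A2).get p).op = Op.release l := hrel
  have hacq' : ((esList A1 A2).get q).op = Op.acquire l := hacq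
  have hvm := get_mem_esList (A1 := A1) (A2 := A2) p
  have hwm := get_mem_esList (A1 := A1) (A2 := A2) q
  rcases hp with ⟨j, hj⟩ | ⟨i, hA, ⟨a'', htv⟩, hops⟩ | ⟨y, hcom, hty⟩
  · -- the release is in thread group `a`
    rcases mem_of_op_release hvm hrel' with ⟨a2, hl, htv⟩ | ⟨a2, i2, htv, hl⟩ |
      ⟨y2, i2, hl, hA2, htv⟩
    · have ha2 : a2.val = a.val := by
        have := (htv.symm.trans hj); rw [tidX_inj] at this; exact this.1
      subst hl
      rw [ha2] at hacq'
      exact reach_of_acq_lockX hwm hacq'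
    · have ha2 : a2.val = a.val := by
        have := (htv.symm.trans hj); rw [tidX_inj] at this; exact this.1
      have ha2' : a2 = a := Fin.val_injective ha2
      subst ha2'
      rcases hl with hl | ⟨hl, hAi⟩ | ⟨⟨y2, hl⟩, hAi⟩
      · subst hl
        exact reach_of_acq_lockX hwm hacq'
      · subst hl
        exact reach_of_acq_lockI hAi hwm hacq'
      · subst hl
        exact reach_of_acq_lockYI hAi hwm hacq'
    · rw [htv] at hj
      exact absurd hj.symm tidX_ne_tidY
  · -- the release is one of the invariant's allowed ops in some thread `t(a'', i)`
    rcases hops with hops | hops | ⟨y, hops | hops⟩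
    · rw [hops] at hrel'; exact absurd hrel' (by simp)
    · have hl : lockI i.val = l := by
        rw [hops] at hrel'; simpa using hrel'
      subst hl
      exact reach_of_acq_lockI hA hwm hacq'
    · rw [hops] at hrel'; exact absurd hrel' (by simp)
    · have hl : lockYI y.val i.val = l := by
        rw [hops] at hrel'; simpa using hrel'
      subst hl
      exact reach_of_acq_lockYI hA hwm hacq'
  · -- the release is in thread `t_y`
    rcases mem_of_op_release hvm hrel' with ⟨a2, hl, htv⟩ | ⟨a2, i2, htv, hl⟩ |
      ⟨y2, i2, hl, hA2, htv⟩
    · rw [htv] at hty; exact absurd hty tidX_ne_tidY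
    · rw [htv] at hty; exact absurd hty tidX_ne_tidY
    · have hy2 : y2 = y := by
        have := htv.symm.trans hty; rw [tidY_inj] at this; exact Fin.val_injective this
      subst hy2
      subst hl
      rcases mem_of_op_acquire hwm hacq' with ⟨a3, hl3, -⟩ | ⟨a3, i3, htw, hl3⟩ |
        ⟨y3, i3, hl3, hA3, htw⟩
      · simp [lockX, lockYI, Nat.pair_eq_pair] at hl3
      · rcases hl3 with hl3 | ⟨hl3, -⟩ | ⟨⟨y3, hl3⟩, -⟩
        · simp [lockX, lockYI, Nat.pair_eq_pair] at hl3
        · simp [lockI, lockYI, Nat.pair_eq_pair] at hl3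
        · -- acquire in the X part, release in the Y part: contradicts trace order
          exfalso
          apply not_bef_of_lt hpq
          have hw' : (esList A1 A2).get q ∈ threadXi A1 a3 i3 :=
            loc_tidXi (get_mem_esList q) htw
          have hv' : (esList A1 A2).get p ∈ threadY A2 y2 :=
            loc_tidY (get_mem_esList p) hty
          exact ⟨Xpart A1, Ypart A2, rfl, mem_Xpart_of_threadXi hw',
            mem_Ypart_of_threadY hv'⟩
      · rw [lockYI_inj] at hl3
        have : y3 = y2 := Fin.val_injective hl3.1.symm
        subst this
        exact Or.inr (Or.inr ⟨y3, hcom, htw⟩)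

/-- Reachability is preserved along HB. -/
lemma reach_closed {a : Fin n} {p q : Fin (ovhbTrace A1 A2).N}
    (hb : HB (ovhbTrace A1 A2) p q) :
    Reach A1 A2 a ((esList A1 A2).get p) → Reach A1 A2 a ((esList A1 A2).get q) := by
  induction hb with
  | refl _ => exact id
  | thread hpq ht => exact reach_step_thread hpq ht
  | relAcq l hpq hrel hacq => exact reach_step_relAcq hpq hrel hacq
  | trans _ _ ih1 ih2 => exact fun hp => ih2 (ih1 hp)


/-! #### The forward chain -/

lemma exists_isLast {A1 : Fin n → Fin d → Bool} {a : Fin n} {i : Fin d} (hA : A1 a i = true) :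
    ∃ a' : Fin n, a ≤ a' ∧ isLast A1 a' i := by
  classical
  set s := Finset.univ.filter (fun c : Fin n => A1 c i = true) with hs
  have hne : s.Nonempty := ⟨a, by simp [hs, hA]⟩
  refine ⟨s.max' hne, Finset.le_max' _ a (by simp [hs, hA]), ?_, ?_⟩
  · have := Finset.max'_mem _ hne
    simpa [hs] using this
  · intro b hb
    by_contra hc
    rw [Bool.not_eq_false] at hc
    have hle := Finset.le_max' s b (by simp [hs, hc])
    exact absurd hb (not_lt.2 hle)

lemma v0_mem (a : Fin n) : (⟨tidX a.val 0, Op.write 0⟩ : Event) ∈ esList A1 A2 :=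
  List.mem_append_left _ (mem_Xpart_of_threadX0 (mem_threadX0.2 (Or.inl rfl)))

lemma v7_mem (b : Fin n) : (⟨tidY b.val, Op.read 0⟩ : Event) ∈ esList A1 A2 :=
  List.mem_append_right _ (mem_Ypart_of_threadY (mem_threadY.2 (Or.inr rfl)))

lemma bef_v0_v7 (a b : Fin n) :
    Bef (esList A1 A2) ⟨tidX a.val 0, Op.write 0⟩ ⟨tidY b.val, Op.read 0⟩ :=
  ⟨Xpart A1, Ypart A2, rfl, mem_Xpart_of_threadX0 (mem_threadX0.2 (Or.inl rfl)),
    mem_Ypart_of_threadY (mem_threadY.2 (Or.inr rfl))⟩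

lemma mem_es_of_threadX0 {a : Fin n} {v : Event} (h : v ∈ threadX0 a) :
    v ∈ esList A1 A2 := List.mem_append_left _ (mem_Xpart_of_threadX0 h)

lemma mem_es_of_threadXi {a : Fin n} {i : Fin d} {v : Event} (h : v ∈ threadXi A1 a i) :
    v ∈ esList A1 A2 := List.mem_append_left _ (mem_Xpart_of_threadXi h)

lemma mem_es_of_threadY {y : Fin n} {v : Event} (h : v ∈ threadY A2 y) :
    v ∈ esList A1 A2 := List.mem_append_right _ (mem_Ypart_of_threadY h)

lemma hb_forward (a b : Fin n) (i : Fin d) (hA : A1 a i = true) (hB : A2 b i = true)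
    (h0 : (⟨tidX a.val 0, Op.write 0⟩ : Event) ∈ esList A1 A2)
    (h7 : (⟨tidY b.val, Op.read 0⟩ : Event) ∈ esList A1 A2) :
    HB (ovhbTrace A1 A2) (epos A1 A2 ⟨tidX a.val 0, Op.write 0⟩ h0)
      (epos A1 A2 ⟨tidY b.val, Op.read 0⟩ h7) := by
  obtain ⟨a', haa', hLast⟩ := exists_isLast hA
  have hA' : A1 a' i = true := hLast.1
  have hsplit : ∀ c : Fin n, A1 c i = true → isLast A1 c i →
      threadXi A1 c i = cs (tidX c.val (i.val+1)) (lockX c.val) ++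
        (cs (tidX c.val (i.val+1)) (lockI i.val) ++
          ((List.finRange n).map
            (fun y => cs (tidX c.val (i.val+1)) (lockYI y.val i.val))).flatten) := by
    intro c h1 h2; unfold threadXi; rw [if_pos h1, if_pos h2]
  -- block memberships of the chain events
  have m0 : (⟨tidX a.val 0, Op.write 0⟩ : Event) ∈ threadX0 a := mem_threadX0.2 (Or.inl rfl)
  have m1 : (⟨tidX a.val 0, Op.release (lockX a.val)⟩ : Event) ∈ threadX0 a :=
    mem_threadX0.2 (Or.inr (Or.inr rfl))
  have m2 : (⟨tidX a.val (i.val+1), Op.acquire (lockX a.val)⟩ : Event) ∈ threadXi A1 a i :=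
    mem_threadXi.2 (Or.inl (Or.inl rfl))
  have m3 : (⟨tidX a.val (i.val+1), Op.release (lockI i.val)⟩ : Event) ∈ threadXi A1 a i :=
    mem_threadXi.2 (Or.inr ⟨hA, Or.inl (Or.inr rfl)⟩)
  have m5 : (⟨tidX a'.val (i.val+1), Op.release (lockYI b.val i.val)⟩ : Event)
      ∈ threadXi A1 a' i :=
    mem_threadXi.2 (Or.inr ⟨hA', Or.inr ⟨hLast, b, Or.inr rfl⟩⟩)
  have m6 : (⟨tidY b.val, Op.acquire (lockYI b.val i.val)⟩ : Event) ∈ threadY A2 b :=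
    mem_threadY.2 (Or.inl ⟨i, hB, Or.inl rfl⟩)
  have m7 : (⟨tidY b.val, Op.read 0⟩ : Event) ∈ threadY A2 b := mem_threadY.2 (Or.inr rfl)
  -- step 1: write → release ℓ^x (thread order in t(x,0))
  have b01 : Bef (esList A1 A2) ⟨tidX a.val 0, Op.write 0⟩
      ⟨tidX a.val 0, Op.release (lockX a.val)⟩ := by
    apply bef_es_of_groupX (a := a)
    exact Bef.append_right ⟨[⟨tidX a.val 0, Op.write 0⟩], cs (tidX a.val 0) (lockX a.val),
      rfl, List.mem_singleton.2 rfl, mem_cs.2 (Or.inr rfl)⟩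
  have h01 := hb_bef_thread b01 rfl
  -- step 2: release ℓ^x → acquire ℓ^x in t(x,i)
  have b12 : Bef (esList A1 A2) ⟨tidX a.val 0, Op.release (lockX a.val)⟩
      ⟨tidX a.val (i.val+1), Op.acquire (lockX a.val)⟩ := by
    apply bef_es_of_groupX (a := a)
    exact bef_append m1 (List.mem_flatten.2 ⟨_, List.mem_map.2 ⟨i, List.mem_finRange i, rfl⟩, m2⟩)
  have h12 := hb_bef_relAcq b12 rfl rfl
  -- step 3: acquire ℓ^x → release ℓ_i (thread order in t(x,i))
  have b23 : Bef (esList A1 A2) ⟨tidX a.val (i.val+1), Op.acquire (lockX a.val)⟩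
      ⟨tidX a.val (i.val+1), Op.release (lockI i.val)⟩ := by
    apply bef_es_of_threadXi (a := a) (i := i)
    unfold threadXi
    refine bef_append (mem_cs.2 (Or.inl rfl)) ?_
    rw [if_pos hA]
    exact List.mem_append_left _ (mem_cs.2 (Or.inr rfl))
  have h23 := hb_bef_thread b23 rfl
  -- middle: release ℓ_i in t(x,i) happens-before release ℓ_(y,i) in the last vector's thread
  have M3 : (⟨tidX a.val (i.val+1), Op.release (lockI i.val)⟩ : Event) ∈ esList A1 A2 :=
    mem_es_of_threadXi m3
  have M5 : (⟨tidX a'.val (i.val+1), Op.release (lockYI b.val i.val)⟩ : Event)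
      ∈ esList A1 A2 := mem_es_of_threadXi m5
  have hmid : HB (ovhbTrace A1 A2)
      (epos A1 A2 ⟨tidX a.val (i.val+1), Op.release (lockI i.val)⟩ M3)
      (epos A1 A2 ⟨tidX a'.val (i.val+1), Op.release (lockYI b.val i.val)⟩ M5) := by
    rcases lt_or_eq_of_le haa' with hlt | heq
    · -- a < a' : go through the lock ℓ_i
      have m4 : (⟨tidX a'.val (i.val+1), Op.acquire (lockI i.val)⟩ : Event)
          ∈ threadXi A1 a' i := mem_threadXi.2 (Or.inr ⟨hA', Or.inl (Or.inl rfl)⟩)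
      have b34 : Bef (esList A1 A2) ⟨tidX a.val (i.val+1), Op.release (lockI i.val)⟩
          ⟨tidX a'.val (i.val+1), Op.acquire (lockI i.val)⟩ := by
        apply Bef.append_right (Q := Ypart A2)
        refine bef_flatten_map_finRange (fun c => groupX A1 c) hlt ?_ ?_
        · exact List.mem_append_right _
            (List.mem_flatten.2 ⟨_, List.mem_map.2 ⟨i, List.mem_finRange i, rfl⟩, m3⟩)
        · exact List.mem_append_right _
            (List.mem_flatten.2 ⟨_, List.mem_map.2 ⟨i, List.mem_finRange i, rfl⟩, m4⟩)
      have h34 := hb_bef_relAcq b34 rfl rfl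
      have b45 : Bef (esList A1 A2) ⟨tidX a'.val (i.val+1), Op.acquire (lockI i.val)⟩
          ⟨tidX a'.val (i.val+1), Op.release (lockYI b.val i.val)⟩ := by
        apply bef_es_of_threadXi (a := a') (i := i)
        rw [hsplit a' hA' hLast]
        refine Bef.append_left _ (bef_append (mem_cs.2 (Or.inl rfl)) ?_)
        exact List.mem_flatten.2 ⟨_, List.mem_map.2 ⟨b, List.mem_finRange b, rfl⟩,
          mem_cs.2 (Or.inr rfl)⟩
      have h45 := hb_bef_thread b45 rfl
      exact h34.trans h45
    · -- a = a' : thread order inside t(x,i)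
      subst heq
      have b35 : Bef (esList A1 A2) ⟨tidX a.val (i.val+1), Op.release (lockI i.val)⟩
          ⟨tidX a.val (i.val+1), Op.release (lockYI b.val i.val)⟩ := by
        apply bef_es_of_threadXi (a := a) (i := i)
        rw [hsplit a hA hLast]
        refine Bef.append_left _ (bef_append (mem_cs.2 (Or.inr rfl)) ?_)
        exact List.mem_flatten.2 ⟨_, List.mem_map.2 ⟨b, List.mem_finRange b, rfl⟩,
          mem_cs.2 (Or.inr rfl)⟩
      exact hb_bef_thread b35 rfl
  -- step 6: release ℓ_(y,i) → acquire ℓ_(y,i) in t_y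
  have b56 : Bef (esList A1 A2)
      ⟨tidX a'.val (i.val+1), Op.release (lockYI b.val i.val)⟩
      ⟨tidY b.val, Op.acquire (lockYI b.val i.val)⟩ :=
    ⟨Xpart A1, Ypart A2, rfl, mem_Xpart_of_threadXi m5, mem_Ypart_of_threadY m6⟩
  have h56 := hb_bef_relAcq b56 rfl rfl
  -- step 7: acquire ℓ_(y,i) → read (thread order in t_y)
  have b67 : Bef (esList A1 A2) ⟨tidY b.val, Op.acquire (lockYI b.val i.val)⟩
      ⟨tidY b.val, Op.read 0⟩ := by
    apply bef_es_of_threadY (y := b)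
    unfold threadY
    refine bef_append ?_ (by simp)
    exact List.mem_flatten.2 ⟨_, List.mem_map.2 ⟨i,
      List.mem_filter.2 ⟨List.mem_finRange i, by simp [hB]⟩, rfl⟩, mem_cs.2 (Or.inl rfl)⟩
  have h67 := hb_bef_thread b67 rfl
  exact ((((h01.trans h12).trans h23).trans hmid).trans h56).trans h67

/-! #### Characterizing writes and reads -/

lemma write_tid {v : Event} (hv : v ∈ esList A1 A2) {x : ℕ} (ho : v.op = Op.write x) :
    ∃ a : Fin n, v.tid = tidX a.val 0 := by
  rcases mem_esList.1 hv with ⟨a', h | ⟨i', h⟩⟩ | ⟨y', h⟩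
  · exact ⟨a', tid_of_mem_threadX0 h⟩
  · rcases mem_threadXi.1 h with (rfl | rfl) | ⟨-, (rfl | rfl) | ⟨-, y, rfl | rfl⟩⟩ <;>
      exact absurd ho (by simp)
  · rcases mem_threadY.1 h with ⟨i'', -, rfl | rfl⟩ | rfl <;> exact absurd ho (by simp)

lemma read_tid {v : Event} (hv : v ∈ esList A1 A2) {x : ℕ} (ho : v.op = Op.read x) :
    ∃ y : Fin n, v.tid = tidY y.val := by
  rcases mem_esList.1 hv with ⟨a', h | ⟨i', h⟩⟩ | ⟨y', h⟩
  · rcases mem_threadX0.1 h with rfl | rfl | rfl <;> exact absurd ho (by simp)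
  · rcases mem_threadXi.1 h with (rfl | rfl) | ⟨-, (rfl | rfl) | ⟨-, y, rfl | rfl⟩⟩ <;>
      exact absurd ho (by simp)
  · exact ⟨y', tid_of_mem_threadY h⟩

/-! #### Part 1 -/

lemma part1 (a b : Fin n) (e1 e2 : Fin (ovhbTrace A1 A2).N)
    (ht1 : (ovhbTrace A1 A2).tid e1 = tidX a.val 0)
    (ho1 : (ovhbTrace A1 A2).op e1 = Op.write 0)
    (ht2 : (ovhbTrace A1 A2).tid e2 = tidY b.val)
    (ho2 : (ovhbTrace A1 A2).op e2 = Op.read 0) :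
    HB (ovhbTrace A1 A2) e1 e2 ↔ ∃ i : Fin d, A1 a i = true ∧ A2 b i = true := by
  have hv0 : (esList A1 A2).get e1 = ⟨tidX a.val 0, Op.write 0⟩ := by
    have h1 : ((esList A1 A2).get e1).tid = tidX a.val 0 := ht1
    have h2 : ((esList A1 A2).get e1).op = Op.write 0 := ho1
    cases hq : (esList A1 A2).get e1
    rw [hq] at h1 h2
    simp only [Event.mk.injEq]
    exact ⟨h1, h2⟩
  have hv7 : (esList A1 A2).get e2 = ⟨tidY b.val, Op.read 0⟩ := by
    have h1 : ((esList A1 A2).get e2).tid = tidY b.val := ht2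
    have h2 : ((esList A1 A2).get e2).op = Op.read 0 := ho2
    cases hq : (esList A1 A2).get e2
    rw [hq] at h1 h2
    simp only [Event.mk.injEq]
    exact ⟨h1, h2⟩
  constructor
  · intro hb
    have hr : Reach A1 A2 a ((esList A1 A2).get e2) :=
      reach_closed hb (by rw [hv0]; exact Or.inl ⟨0, rfl⟩)
    rw [hv7] at hr
    rcases hr with ⟨j, hj⟩ | ⟨i, hAi, ⟨a'', htv⟩, -⟩ | ⟨y, hcom, hty⟩
    · exact absurd hj.symm tidX_ne_tidY
    · exact absurd htv.symm tidX_ne_tidY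
    · have : y = b := (Fin.val_injective (tidY_inj.1 hty)).symm
      subst this
      exact hcom
  · rintro ⟨i, hAi, hBi⟩
    have he1 : e1 = epos A1 A2 ⟨tidX a.val 0, Op.write 0⟩ (v0_mem a) :=
      eq_epos_of_get hv0 (v0_mem a)
    have he2 : e2 = epos A1 A2 ⟨tidY b.val, Op.read 0⟩ (v7_mem b) :=
      eq_epos_of_get hv7 (v7_mem b)
    rw [he1, he2]
    exact hb_forward a b i hAi hBi (v0_mem a) (v7_mem b)

end OVHB

/-- In the OV-to-HB trace, the write `w(z)` of the thread group of `x = A1 a`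
happens-before the read `r(z)` of thread `t_y` (`y = A2 b`) iff `x` and `y` are not orthogonal.
Consequently the trace has an HB-race between a write and a read of `z` iff the OV instance
has an orthogonal pair. -/
theorem ovhb_reduction_correct {n d : ℕ} (A1 A2 : Fin n → Fin d → Bool) :
    (∀ (a b : Fin n) (e1 e2 : Fin (ovhbTrace A1 A2).N),
      (ovhbTrace A1 A2).tid e1 = tidX a.val 0 → (ovhbTrace A1 A2).op e1 = Op.write 0 →
      (ovhbTrace A1 A2).tid e2 = tidY b.val → (ovhbTrace A1 A2).op e2 = Op.read 0 →
      (HB (ovhbTrace A1 A2) e1 e2 ↔ ∃ i : Fin d, A1 a i = true ∧ A2 b i = true)) ∧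
    ((∃ e1 e2 : Fin (ovhbTrace A1 A2).N,
        (ovhbTrace A1 A2).op e1 = Op.write 0 ∧ (ovhbTrace A1 A2).op e2 = Op.read 0 ∧
        ¬ HB (ovhbTrace A1 A2) e1 e2 ∧ ¬ HB (ovhbTrace A1 A2) e2 e1) ↔
      ∃ a b : Fin n, ∀ i : Fin d, ¬ (A1 a i = true ∧ A2 b i = true)) := by
  constructor
  · exact fun a b e1 e2 ht1 ho1 ht2 ho2 => OVHB.part1 a b e1 e2 ht1 ho1 ht2 ho2
  · constructor
    · rintro ⟨e1, e2, ho1, ho2, hn12, -⟩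
      obtain ⟨a, ht1⟩ := OVHB.write_tid (OVHB.get_mem_esList e1) ho1
      obtain ⟨b, ht2⟩ := OVHB.read_tid (OVHB.get_mem_esList e2) ho2
      refine ⟨a, b, fun i hi => hn12 ?_⟩
      exact (OVHB.part1 a b e1 e2 ht1 ho1 ht2 ho2).2 ⟨i, hi.1, hi.2⟩
    · rintro ⟨a, b, horth⟩
      refine ⟨OVHB.epos A1 A2 ⟨tidX a.val 0, Op.write 0⟩ (OVHB.v0_mem a),
        OVHB.epos A1 A2 ⟨tidY b.val, Op.read 0⟩ (OVHB.v7_mem b), ?_, ?_, ?_, ?_⟩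
      · exact OVHB.op_epos (OVHB.v0_mem a)
      · exact OVHB.op_epos (OVHB.v7_mem b)
      · intro hb
        obtain ⟨i, hi⟩ := (OVHB.part1 a b _ _ (OVHB.tid_epos (OVHB.v0_mem a))
          (OVHB.op_epos (OVHB.v0_mem a)) (OVHB.tid_epos (OVHB.v7_mem b))
          (OVHB.op_epos (OVHB.v7_mem b))).1 hb
        exact horth i hi
      · intro hb
        have hle := OVHB.HB_le hb
        have hlt := OVHB.epos_lt_of_bef (A1 := A1) (A2 := A2) (OVHB.bef_v0_v7 a b) (OVHB.v0_mem a) (OVHB.v7_mem b)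
        exact absurd hle (not_le.2 hlt)
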